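/- arXiv:2509.17597 — 2 statements merged into one kernel-verified Lean document; each statement's English description precedes it below -/
import Mathlib

section
/- The map C ↦ D_α(C) is an inclusion-reversing bijection between the set of ideals of R = F[X_1,…,X_s]/⟨X_i^{r_i}−1⟩ and the set of subsets of ∏ Z_{r_i} that are unions of q-orbits, with inverse Q ↦ {f ∈ R : f(α^m) = 0 for all m ∈ Q}. -/
open MvPolynomial

/-- The ideal `⟨X_1^{r_1} - 1, …, X_s^{r_s} - 1⟩` of `F[X_1,…,X_s]`. -/
noncomputable def polyRelIdeal (F : Type*) [Field F] {s : ℕ} (r : Fin s → ℕ) :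
    Ideal (MvPolynomial (Fin s) F) :=
  Ideal.span (Set.range fun i => X i ^ r i - 1)

/-- The defining set of an ideal `A` of `F[X_1,…,X_s]/⟨X_i^{r_i} - 1⟩` with respect to the
tuple `α` of roots of unity in the extension `L`: those `m ∈ ∏ ZMod (r i)` such that every
(representative of an) element of `A` vanishes at `(α_1^{m_1},…,α_s^{m_s})`. -/
noncomputable def defSet {F : Type*} [Field F] (L : Type*) [Field L] [Algebra F L]
    {s : ℕ} (r : Fin s → ℕ) (α : Fin s → L)
    (A : Ideal (MvPolynomial (Fin s) F ⧸ polyRelIdeal F r)) :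
    Set ((i : Fin s) → ZMod (r i)) :=
  {m | ∀ f : MvPolynomial (Fin s) F,
    Ideal.Quotient.mk (polyRelIdeal F r) f ∈ A →
    aeval (fun i => α i ^ (m i).val) f = 0}

set_option synthInstance.maxHeartbeats 800000
set_option maxHeartbeats 1600000


/-- A multivariate polynomial whose degree in each variable `i` is less than the size of a
finite set `S i`, and which vanishes on the grid `∏ S i`, is zero. -/
lemma grid_eq_zero {L : Type*} [Field L] :
    ∀ {n : ℕ} (S : Fin n → Finset L) (f : MvPolynomial (Fin n) L),
    (∀ i, f.degreeOf i < (S i).card) →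
    (∀ x : Fin n → L, (∀ i, x i ∈ S i) → eval x f = 0) → f = 0 := by
  intro n
  induction n with
  | zero =>
    intro S f _ hz
    obtain ⟨a, rfl⟩ := C_surjective (Fin 0) f
    have := hz (fun i => i.elim0) (fun i => i.elim0)
    rw [eval_C] at this
    rw [this, map_zero]
  | succ n ih =>
    intro S f hdeg hz
    have hPcoeff : ∀ j, (finSuccEquiv L n f).coeff j = 0 := by
      intro j
      apply ih (fun i => S i.succ)
      · intro i
        exact lt_of_le_of_lt (degreeOf_coeff_finSuccEquiv f i j) (hdeg i.succ)
      · intro x hx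
        have hpoly : (finSuccEquiv L n f).map (eval x) = 0 := by
          apply Polynomial.eq_zero_of_natDegree_lt_card_of_eval_eq_zero' _ (S 0)
          · intro y hy
            rw [← eval_eq_eval_mv_eval']
            apply hz
            intro i
            refine Fin.cases ?_ ?_ i
            · simpa using hy
            · intro j; simpa using hx j
          · calc ((finSuccEquiv L n f).map (eval x)).natDegree
                ≤ (finSuccEquiv L n f).natDegree := Polynomial.natDegree_map_le
              _ = f.degreeOf 0 := natDegree_finSuccEquiv f
              _ < (S 0).card := hdeg 0
        have := congrArg (fun p => Polynomial.coeff p j) hpoly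
        simpa [Polynomial.coeff_map] using this
    have : finSuccEquiv L n f = 0 := Polynomial.ext fun j => by simp [hPcoeff j]
    have := congrArg (finSuccEquiv L n).symm this
    simpa using this



section Aux

variable {F L : Type*} [Field F] [Field L] [Algebra F L]
variable {s : ℕ} {r : Fin s → ℕ} {α : Fin s → L}

/-- The grid point `α^m`. -/
noncomputable def gridPt (α : Fin s → L) (m : ∀ i, ZMod (r i)) : Fin s → L :=
  fun i => α i ^ (m i).val

lemma aeval_rel_zero (hα : ∀ i, orderOf (α i) = r i) (m : ∀ i, ZMod (r i)) :
    ∀ a ∈ polyRelIdeal F r, aeval (R := F) (gridPt α m) a = 0 := by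
  have hle : polyRelIdeal F r ≤
      RingHom.ker (aeval (R := F) (gridPt α m) : MvPolynomial (Fin s) F →ₐ[F] L) := by
    rw [polyRelIdeal, Ideal.span_le]
    rintro _ ⟨i, rfl⟩
    have h1 : (α i) ^ (r i) = 1 := by rw [← hα i]; exact pow_orderOf_eq_one _
    simp only [SetLike.mem_coe, RingHom.mem_ker, map_sub, map_pow, map_one, aeval_X, gridPt]
    rw [← pow_mul, mul_comm, pow_mul, h1, one_pow, sub_self]
  intro a ha
  exact hle ha

/-- The evaluation map at `α^m` on the quotient ring. -/
noncomputable def phi (hα : ∀ i, orderOf (α i) = r i) (m : ∀ i, ZMod (r i)) :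
    (MvPolynomial (Fin s) F ⧸ polyRelIdeal F r) →ₐ[F] L :=
  Ideal.Quotient.liftₐ (polyRelIdeal F r) (aeval (gridPt α m)) (aeval_rel_zero hα m)

lemma phi_mk (hα : ∀ i, orderOf (α i) = r i) (m : ∀ i, ZMod (r i))
    (f : MvPolynomial (Fin s) F) :
    phi hα m (Ideal.Quotient.mk (polyRelIdeal F r) f) = aeval (gridPt α m) f := by
  rw [phi, Ideal.Quotient.liftₐ_apply]
  rfl

lemma apow (hr : ∀ i, 0 < r i) (hα : ∀ i, orderOf (α i) = r i) (i : Fin s)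
    (k : ZMod (r i)) (t : ℕ) :
    (α i ^ k.val) ^ t = α i ^ (((t : ZMod (r i)) * k).val) := by
  haveI : NeZero (r i) := ⟨(hr i).ne'⟩
  have hx : α i ^ (r i) = 1 := by rw [← hα i]; exact pow_orderOf_eq_one _
  rw [← pow_mul, pow_eq_pow_mod _ hx, pow_eq_pow_mod (((t : ZMod (r i)) * k)).val hx]
  congr 1
  have : ((k.val * t : ℕ) : ZMod (r i)) = (((((t : ZMod (r i)) * k)).val : ℕ) : ZMod (r i)) := by
    push_cast [ZMod.natCast_val, ZMod.cast_id]
    ring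
  exact (ZMod.natCast_eq_natCast_iff _ _ _).mp this

end Aux

section FF

variable (F : Type*) {L : Type*} [Field F] [Fintype F] [Field L] [Algebra F L]

/-- The `q`-power Frobenius of `L`, as an `F`-algebra endomorphism. -/
lemma exists_frobAlg : ∃ ψ : L →ₐ[F] L, ∀ x, ψ x = x ^ (Fintype.card F) := by
  obtain ⟨n, hp, hcard⟩ := FiniteField.card F (ringChar F)
  haveI : CharP L (ringChar F) :=
    charP_of_injective_algebraMap (algebraMap F L).injective _
  haveI : ExpChar L (ringChar F) := ExpChar.prime hp
  have key : ∀ x : L, iterateFrobenius L (ringChar F) n x = x ^ (Fintype.card F) := by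
    intro x; rw [iterateFrobenius_def, hcard]
  refine ⟨{ toRingHom := iterateFrobenius L (ringChar F) n, commutes' := ?_ }, key⟩
  intro a
  show iterateFrobenius L (ringChar F) n (algebraMap F L a) = algebraMap F L a
  rw [key, ← map_pow, FiniteField.pow_card]

end FF

section Frob

variable {F L : Type*} [Field F] [Fintype F] [Field L] [Algebra F L]
variable {s : ℕ} {r : Fin s → ℕ} {α : Fin s → L}

lemma phi_frob (hr : ∀ i, 0 < r i) (hα : ∀ i, orderOf (α i) = r i)
    (m : ∀ i, ZMod (r i)) (g : MvPolynomial (Fin s) F ⧸ polyRelIdeal F r) :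
    phi hα (fun i => (Fintype.card F : ZMod (r i)) * m i) g
      = (phi hα m g) ^ (Fintype.card F) := by
  obtain ⟨ψ, hψ⟩ := exists_frobAlg F (L := L)
  obtain ⟨f, rfl⟩ := Ideal.Quotient.mk_surjective g
  rw [phi_mk, phi_mk, ← hψ]
  have : (aeval (R := F) (gridPt α (fun i => (Fintype.card F : ZMod (r i)) * m i)) : MvPolynomial (Fin s) F →ₐ[F] L)
      = ψ.comp (aeval (gridPt α m)) := by
    apply algHom_ext
    intro i
    simp only [aeval_X, AlgHom.comp_apply, hψ, gridPt]
    rw [apow hr hα]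
  rw [this]
  rfl

lemma phi_frob_pow (hr : ∀ i, 0 < r i) (hα : ∀ i, orderOf (α i) = r i)
    (m : ∀ i, ZMod (r i)) (g : MvPolynomial (Fin s) F ⧸ polyRelIdeal F r) (t : ℕ) :
    phi hα (fun i => (Fintype.card F : ZMod (r i)) ^ t * m i) g
      = (phi hα m g) ^ (Fintype.card F ^ t) := by
  induction t with
  | zero => simp
  | succ t iht =>
    have h1 : (fun i => (Fintype.card F : ZMod (r i)) ^ (t+1) * m i)
        = fun i => (Fintype.card F : ZMod (r i)) * ((Fintype.card F : ZMod (r i)) ^ t * m i) := by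
      funext i; ring
    rw [h1, phi_frob hr hα _ g, iht, ← pow_mul, pow_succ]

end Frob

section Red
variable {F : Type*} [Field F] {s : ℕ} {r : Fin s → ℕ}

/-- exponent reduction -/
noncomputable def redExp (r : Fin s → ℕ) (d : Fin s →₀ ℕ) : Fin s →₀ ℕ :=
  Finsupp.equivFunOnFinite.symm fun i => d i % r i

@[simp] lemma redExp_apply (d : Fin s →₀ ℕ) (i : Fin s) : redExp r d i = d i % r i := rfl

lemma mk_X_pow (i : Fin s) :
    (Ideal.Quotient.mk (polyRelIdeal F r) (X i)) ^ (r i) = 1 := by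
  have h : Ideal.Quotient.mk (polyRelIdeal F r) (X i ^ r i - 1) = 0 :=
    Ideal.Quotient.eq_zero_iff_mem.mpr (Ideal.subset_span ⟨i, rfl⟩)
  rw [map_sub, map_pow, map_one, sub_eq_zero] at h
  exact h

lemma mk_monomial_red (d : Fin s →₀ ℕ) (c : F) :
    Ideal.Quotient.mk (polyRelIdeal F r) (monomial d c)
      = Ideal.Quotient.mk (polyRelIdeal F r) (monomial (redExp r d) c) := by
  rw [monomial_eq, monomial_eq, map_mul, map_mul]
  congr 1
  rw [Finsupp.prod_fintype _ _ (fun i => pow_zero _),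
      Finsupp.prod_fintype _ _ (fun i => pow_zero _), map_prod, map_prod]
  apply Finset.prod_congr rfl
  intro i _
  rw [map_pow, map_pow, redExp_apply]
  exact pow_eq_pow_mod (d i) (mk_X_pow i)

/-- reduced representative -/
noncomputable def redPoly (r : Fin s → ℕ) (f : MvPolynomial (Fin s) F) :
    MvPolynomial (Fin s) F :=
  ∑ d ∈ f.support, monomial (redExp r d) (coeff d f)

lemma mk_redPoly (f : MvPolynomial (Fin s) F) :
    Ideal.Quotient.mk (polyRelIdeal F r) (redPoly r f)
      = Ideal.Quotient.mk (polyRelIdeal F r) f := by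
  conv_rhs => rw [← support_sum_monomial_coeff f]
  rw [redPoly, map_sum, map_sum]
  exact Finset.sum_congr rfl fun d _ => (mk_monomial_red d (coeff d f)).symm

lemma redPoly_degreeOf_lt (hr : ∀ i, 0 < r i) (f : MvPolynomial (Fin s) F) (i : Fin s) :
    (redPoly r f).degreeOf i < r i := by
  classical
  rw [degreeOf_lt_iff (hr i)]
  intro m hm
  have := MvPolynomial.support_sum hm
  obtain ⟨d, _, hd⟩ := Finset.mem_biUnion.mp this
  have := MvPolynomial.support_monomial_subset hd
  rw [Finset.mem_singleton] at this
  subst this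
  exact Nat.mod_lt _ (hr i)

end Red

section Inj
variable {F L : Type*} [Field F] [Field L] [Algebra F L]
variable {s : ℕ} {r : Fin s → ℕ} {α : Fin s → L}


lemma aeval_gridPt_eq_zero_of_all (hr : ∀ i, 0 < r i) (hα : ∀ i, orderOf (α i) = r i)
    (f : MvPolynomial (Fin s) F)
    (h : ∀ m : (∀ i, ZMod (r i)), aeval (gridPt α m) f = 0)
    (hdeg : ∀ i, f.degreeOf i < r i) : f = 0 := by
  classical
  haveI : ∀ i, NeZero (r i) := fun i => ⟨(hr i).ne'⟩
  -- the grids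
  set S : Fin s → Finset L := fun i => Finset.image (fun k => α i ^ k) (Finset.range (r i)) with hS
  have hcard : ∀ i, (S i).card = r i := by
    intro i
    rw [hS]
    rw [Finset.card_image_of_injOn, Finset.card_range]
    intro a ha b hb hab
    simp only [Finset.coe_range, Set.mem_Iio] at ha hb
    exact pow_injOn_Iio_orderOf (by rwa [hα i]) (by rwa [hα i]) hab
  have hmap : (MvPolynomial.map (algebraMap F L)) f = 0 := by
    apply grid_eq_zero S
    · intro i
      have hsub := MvPolynomial.support_map_subset (algebraMap F L) f
      rw [hcard i, degreeOf_lt_iff (hr i)]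
      intro m hm
      exact (degreeOf_lt_iff (hr i)).mp (hdeg i) m (hsub hm)
    · intro x hx
      choose k hk hxk using fun i => Finset.mem_image.mp (hx i)
      set m : ∀ i, ZMod (r i) := fun i => ((k i : ZMod (r i))) with hm
      have hxg : x = gridPt α m := by
        funext i
        rw [← hxk i, hm, gridPt]
        congr 1
        exact (ZMod.val_cast_of_lt (Finset.mem_range.mp (hk i))).symm
      rw [hxg, eval_map, ← MvPolynomial.aeval_def]
      exact h m
  exact MvPolynomial.map_injective _ (algebraMap F L).injective (by simpa using hmap)

lemma phi_injective' (hr : ∀ i, 0 < r i) (hα : ∀ i, orderOf (α i) = r i)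
    (g : MvPolynomial (Fin s) F ⧸ polyRelIdeal F r)
    (h : ∀ m : (∀ i, ZMod (r i)),
      ∀ f, Ideal.Quotient.mk (polyRelIdeal F r) f = g → aeval (gridPt α m) f = 0) :
    g = 0 := by
  obtain ⟨f, rfl⟩ := Ideal.Quotient.mk_surjective g
  rw [← mk_redPoly]
  have hzero : redPoly r f = 0 := by
    apply aeval_gridPt_eq_zero_of_all hr hα _ _ (redPoly_degreeOf_lt hr f)
    intro m
    exact h m (redPoly r f) (mk_redPoly f)
  rw [hzero, map_zero]
end Inj
section FinQ
variable {F : Type*} [Field F] {s : ℕ} {r : Fin s → ℕ}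

lemma finite_quot (hr : ∀ i, 0 < r i) :
    Module.Finite F (MvPolynomial (Fin s) F ⧸ polyRelIdeal F r) := by
  classical
  haveI : ∀ i, NeZero (r i) := fun i => ⟨(hr i).ne'⟩
  refine ⟨⟨Finset.image
      (fun d : (i : Fin s) → Fin (r i) =>
        Ideal.Quotient.mkₐ F (polyRelIdeal F r)
          (monomial (Finsupp.equivFunOnFinite.symm fun i => (d i : ℕ)) 1)) Finset.univ, ?_⟩⟩
  rw [eq_top_iff]
  rintro g -
  obtain ⟨f, rfl⟩ := Ideal.Quotient.mk_surjective g
  rw [← mk_redPoly, ← Ideal.Quotient.mkₐ_eq_mk (R₁ := F), redPoly, map_sum]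
  apply Submodule.sum_mem
  intro d hd
  have hsmul : (monomial (redExp r d)) (coeff d f)
      = coeff d f • (monomial (redExp r d)) (1 : F) := by
    rw [smul_monomial, smul_eq_mul, mul_one]
  rw [hsmul, map_smul]
  apply Submodule.smul_mem
  apply Submodule.subset_span
  refine Finset.mem_image.mpr ⟨fun i => ⟨d i % r i, Nat.mod_lt _ (hr i)⟩, Finset.mem_univ _, ?_⟩
  congr 1
end FinQ
section Fixed
variable {F L : Type*} [Field F] [Fintype F] [Field L] [Algebra F L]

lemma fixed_mem_range (x : L) (hx : x ^ (Fintype.card F) = x) :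
    ∃ a : F, algebraMap F L a = x := by
  classical
  by_contra hc
  push_neg at hc
  have hq : 1 < Fintype.card F := Fintype.one_lt_card
  set q := Fintype.card F with hqdef
  set P : Polynomial L := Polynomial.X ^ q - Polynomial.X with hP
  have hdeg : P.natDegree = q := by
    rw [hP, Polynomial.natDegree_sub_eq_left_of_natDegree_lt, Polynomial.natDegree_X_pow]
    rw [Polynomial.natDegree_X_pow, Polynomial.natDegree_X]; exact hq
  have hPne : P ≠ 0 := by
    intro h
    rw [h, Polynomial.natDegree_zero] at hdeg
    omega
  set A : Finset L := Finset.image (algebraMap F L) Finset.univ with hA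
  have hxA : x ∉ A := by
    intro hmem
    obtain ⟨a, _, ha⟩ := Finset.mem_image.mp hmem
    exact hc a ha
  have hroots : insert x A ⊆ P.roots.toFinset := by
    intro y hy
    rw [Multiset.mem_toFinset, Polynomial.mem_roots']
    refine ⟨hPne, ?_⟩
    rw [Polynomial.IsRoot, hP]
    simp only [Polynomial.eval_sub, Polynomial.eval_pow, Polynomial.eval_X]
    rcases Finset.mem_insert.mp hy with rfl | hy
    · rw [hx, sub_self]
    · obtain ⟨a, _, rfl⟩ := Finset.mem_image.mp hy
      rw [← map_pow, FiniteField.pow_card, sub_self]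
  have hcardA : A.card = q := by
    rw [hA, Finset.card_image_of_injective _ (algebraMap F L).injective, Finset.card_univ]
  have h1 : q + 1 ≤ P.roots.toFinset.card := by
    have := Finset.card_le_card hroots
    rwa [Finset.card_insert_of_notMem hxA, hcardA] at this
  have h2 : P.roots.toFinset.card ≤ q :=
    le_trans (Multiset.toFinset_card_le _)
      (le_trans (Polynomial.card_roots' P) (le_of_eq hdeg))
  omega

end Fixed

/-- `m` lies in the `q`-orbit of `m₀`. -/
def inOrbit {s : ℕ} (r : Fin s → ℕ) (q : ℕ) (m₀ m : ∀ i, ZMod (r i)) : Prop :=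
  ∃ t : ℕ, ∀ i, m i = (q : ZMod (r i)) ^ t * m₀ i

section Orbit
variable {s : ℕ} {r : Fin s → ℕ} {q : ℕ}

lemma inOrbit_refl (m : ∀ i, ZMod (r i)) : inOrbit r q m m :=
  ⟨0, fun i => by simp⟩

lemma inOrbit_trans {a b c : ∀ i, ZMod (r i)} (h1 : inOrbit r q a b)
    (h2 : inOrbit r q b c) : inOrbit r q a c := by
  obtain ⟨t, ht⟩ := h1
  obtain ⟨u, hu⟩ := h2
  exact ⟨u + t, fun i => by rw [hu i, ht i, ← mul_assoc, ← pow_add]⟩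

lemma exists_qpow_one (hr : ∀ i, 0 < r i) (hqr : ∀ i, Nat.Coprime q (r i)) :
    ∃ E : ℕ, 0 < E ∧ ∀ i, ((q : ZMod (r i))) ^ E = 1 := by
  haveI : ∀ i, NeZero (r i) := fun i => ⟨(hr i).ne'⟩
  refine ⟨∏ i, orderOf (ZMod.unitOfCoprime q (hqr i)), ?_, ?_⟩
  · exact Finset.prod_pos fun i _ => orderOf_pos _
  · intro i
    have hdvd : orderOf (ZMod.unitOfCoprime q (hqr i)) ∣ ∏ j, orderOf (ZMod.unitOfCoprime q (hqr j)) :=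
      Finset.dvd_prod_of_mem _ (Finset.mem_univ i)
    have : (ZMod.unitOfCoprime q (hqr i)) ^ (∏ j, orderOf (ZMod.unitOfCoprime q (hqr j))) = 1 :=
      orderOf_dvd_iff_pow_eq_one.mp hdvd
    have := congrArg (Units.val) this
    rw [Units.val_pow_eq_pow_val, ZMod.coe_unitOfCoprime] at this
    simpa using this

lemma inOrbit_symm (hr : ∀ i, 0 < r i) (hqr : ∀ i, Nat.Coprime q (r i))
    {a b : ∀ i, ZMod (r i)} (h : inOrbit r q a b) : inOrbit r q b a := by
  obtain ⟨E, hE, hEone⟩ := exists_qpow_one hr hqr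
  obtain ⟨t, ht⟩ := h
  refine ⟨t * (E - 1), fun i => ?_⟩
  rw [ht i, ← mul_assoc, ← pow_add]
  have harith : t * (E - 1) + t = E * t := by
    cases E with
    | zero => omega
    | succ E' => simp [Nat.succ_sub_one, Nat.mul_succ, Nat.succ_mul, Nat.mul_comm]
  rw [harith, pow_mul, hEone i, one_pow, one_mul]

end Orbit

section Idem
variable {F L : Type*} [Field F] [Fintype F] [Field L] [Algebra F L]
variable {s : ℕ} {r : Fin s → ℕ} {α : Fin s → L}

lemma exists_orbit_idem (hr : ∀ i, 0 < r i)
    (hqr : ∀ i, Nat.Coprime (Fintype.card F) (r i))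
    (hα : ∀ i, orderOf (α i) = r i) (m₀ : ∀ i, ZMod (r i)) :
    ∃ ε : MvPolynomial (Fin s) F ⧸ polyRelIdeal F r,
      (∀ m, inOrbit r (Fintype.card F) m₀ m → phi hα m ε = 1) ∧
      (∀ m, ¬ inOrbit r (Fintype.card F) m₀ m → phi hα m ε = 0) := by
  classical
  haveI : ∀ i, NeZero (r i) := fun i => ⟨(hr i).ne'⟩
  set q := Fintype.card F with hqdef
  set u : ∀ i, (ZMod (r i))ˣ := fun i => ZMod.unitOfCoprime q (hqr i) with hu
  have huq : ∀ i, ((u i : ZMod (r i))) = (q : ZMod (r i)) :=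
    fun i => ZMod.coe_unitOfCoprime _ _
  have hqinv : ∀ i, (q : ZMod (r i)) * (((u i)⁻¹ : (ZMod (r i))ˣ) : ZMod (r i)) = 1 := by
    intro i; rw [← huq i]; exact Units.mul_inv _
  have hinvq : ∀ i, ((((u i)⁻¹ : (ZMod (r i))ˣ) : ZMod (r i))) * (q : ZMod (r i)) = 1 := by
    intro i; rw [← huq i]; exact Units.inv_mul _
  have hqcancel : ∀ (i : Fin s) (a b : ZMod (r i)),
      (q : ZMod (r i)) * a = (q : ZMod (r i)) * b → a = b := by
    intro i a b hab
    have := congrArg (fun z => ((((u i)⁻¹ : (ZMod (r i))ˣ) : ZMod (r i))) * z) hab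
    simpa [← mul_assoc, hinvq i] using this
  -- distinctness of grid coordinates
  have hptne : ∀ (i : Fin s) (a b : ZMod (r i)), a ≠ b → α i ^ a.val ≠ α i ^ b.val := by
    intro i a b hab h
    apply hab
    have := pow_injOn_Iio_orderOf (x := α i)
      (by rw [hα i]; exact ZMod.val_lt a) (by rw [hα i]; exact ZMod.val_lt b) h
    exact ZMod.val_injective _ this
  -- the unnormalized indicator polynomials
  set N : (∀ i, ZMod (r i)) → MvPolynomial (Fin s) L := fun m =>
    ∏ i, ∏ k ∈ Finset.univ.erase (m i), (X i - C (α i ^ k.val)) with hN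
  have hevalN : ∀ m m' : (∀ i, ZMod (r i)), eval (gridPt α m') (N m)
      = ∏ i, ∏ k ∈ Finset.univ.erase (m i), (α i ^ (m' i).val - α i ^ k.val) := by
    intro m m'
    rw [hN]
    rw [eval_prod]
    refine Finset.prod_congr rfl fun i _ => ?_
    rw [eval_prod]
    refine Finset.prod_congr rfl fun k _ => ?_
    simp [gridPt]
  have hNzero : ∀ m m' : (∀ i, ZMod (r i)), m ≠ m' → eval (gridPt α m') (N m) = 0 := by
    intro m m' hne
    obtain ⟨i, hi⟩ : ∃ i, m i ≠ m' i := by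
      by_contra hcon; push_neg at hcon; exact hne (funext hcon)
    rw [hevalN]
    apply Finset.prod_eq_zero (Finset.mem_univ i)
    apply Finset.prod_eq_zero (Finset.mem_erase.mpr ⟨Ne.symm hi, Finset.mem_univ _⟩)
    rw [sub_self]
  have hNdiag : ∀ m : (∀ i, ZMod (r i)), eval (gridPt α m) (N m) ≠ 0 := by
    intro m
    rw [hevalN, Finset.prod_ne_zero_iff]
    intro i _
    rw [Finset.prod_ne_zero_iff]
    intro k hk
    exact sub_ne_zero.mpr (hptne i (m i) k (Ne.symm (Finset.mem_erase.mp hk).1))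
  -- normalized indicators
  set e : (∀ i, ZMod (r i)) → MvPolynomial (Fin s) L := fun m =>
    C (eval (gridPt α m) (N m))⁻¹ * N m with he
  have heval_e : ∀ m m' : (∀ i, ZMod (r i)), eval (gridPt α m') (e m) = if m = m' then 1 else 0 := by
    intro m m'
    rw [he]
    simp only [map_mul, eval_C]
    by_cases hcase : m = m'
    · subst hcase
      rw [if_pos rfl, inv_mul_cancel₀ (hNdiag m)]
    · rw [if_neg hcase, hNzero m m' hcase, mul_zero]
  -- the Frobenius
  obtain ⟨ψ, hψ⟩ := exists_frobAlg F (L := L)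
  set qm : (∀ i, ZMod (r i)) → (∀ i, ZMod (r i)) := fun m i => (q : ZMod (r i)) * m i with hqm
  have hmapN : ∀ m : (∀ i, ZMod (r i)), MvPolynomial.map ψ.toRingHom (N m) = N (qm m) := by
    intro m
    rw [hN]
    simp only []
    rw [map_prod]
    refine Finset.prod_congr rfl fun i _ => ?_
    rw [map_prod]
    refine Finset.prod_nbij' (i := fun k => (q : ZMod (r i)) * k)
      (j := fun k => ((((u i)⁻¹ : (ZMod (r i))ˣ) : ZMod (r i))) * k)
      ?_ ?_ ?_ ?_ ?_
    · intro k hk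
      obtain ⟨hkne, -⟩ := Finset.mem_erase.mp hk
      refine Finset.mem_erase.mpr ⟨fun hcon => hkne (hqcancel i _ _ hcon), Finset.mem_univ _⟩
    · intro k hk
      obtain ⟨hkne, -⟩ := Finset.mem_erase.mp hk
      refine Finset.mem_erase.mpr ⟨fun hcon => ?_, Finset.mem_univ _⟩
      apply hkne
      have := congrArg (fun z => (q : ZMod (r i)) * z) hcon
      simpa [← mul_assoc, hqinv i] using this
    · intro k _
      show (((u i)⁻¹ : (ZMod (r i))ˣ) : ZMod (r i)) * ((q : ZMod (r i)) * k) = k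
      rw [← mul_assoc, hinvq i, one_mul]
    · intro k _
      show (q : ZMod (r i)) * ((((u i)⁻¹ : (ZMod (r i))ˣ) : ZMod (r i)) * k) = k
      rw [← mul_assoc, hqinv i, one_mul]
    · intro k _
      rw [map_sub, MvPolynomial.map_X, MvPolynomial.map_C]
      congr 2
      show ψ (α i ^ k.val) = _
      rw [hψ, apow hr hα i k q]
  have hgrid : ∀ m : (∀ i, ZMod (r i)), gridPt α (qm m) = fun i => ψ (gridPt α m i) := by
    intro m
    funext i
    show α i ^ ((qm m i).val) = ψ (α i ^ (m i).val)
    rw [hψ, apow hr hα i (m i) q]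
  have hmap_eval : ∀ (p : MvPolynomial (Fin s) L) (x : Fin s → L),
      eval (fun i => ψ (x i)) (MvPolynomial.map ψ.toRingHom p) = ψ (eval x p) := by
    intro p x
    rw [eval_map]
    have hcl := eval₂_comp_left (ψ.toRingHom) (RingHom.id L) x p
    rw [eval₂_id, RingHom.comp_id] at hcl
    exact hcl.symm
  have hmapc : ∀ m : (∀ i, ZMod (r i)), ψ (eval (gridPt α m) (N m)) = eval (gridPt α (qm m)) (N (qm m)) := by
    intro m
    rw [← hmapN, hgrid]
    exact (hmap_eval (N m) (gridPt α m)).symm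
  have hmap_e : ∀ m : (∀ i, ZMod (r i)), MvPolynomial.map ψ.toRingHom (e m) = e (qm m) := by
    intro m
    rw [he]
    simp only [map_mul, MvPolynomial.map_C, hmapN]
    congr 2
    rw [map_inv₀]
    congr 1
    exact hmapc m
  -- the orbit
  set O : Finset (∀ i, ZMod (r i)) :=
    Set.Finite.toFinset (Set.toFinite {m | inOrbit r q m₀ m}) with hO
  have hmemO : ∀ m, m ∈ O ↔ inOrbit r q m₀ m := fun m => Set.Finite.mem_toFinset _
  have hqmO : ∀ m ∈ O, qm m ∈ O := by
    intro m hm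
    obtain ⟨t, ht⟩ := (hmemO m).mp hm
    refine (hmemO _).mpr ⟨t + 1, fun i => ?_⟩
    show (q : ZMod (r i)) * m i = _
    rw [ht i, pow_succ, ← mul_assoc, mul_comm ((q : ZMod (r i)) ^ t) (q : ZMod (r i))]
  have hqminj : Function.Injective qm := by
    intro a b hab
    funext i
    exact hqcancel i _ _ (congrFun hab i)
  have himage : Finset.image qm O = O := by
    apply Finset.eq_of_subset_of_card_le
    · intro x hx
      obtain ⟨m, hm, rfl⟩ := Finset.mem_image.mp hx
      exact hqmO m hm
    · rw [Finset.card_image_of_injective _ hqminj]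
  set h : MvPolynomial (Fin s) L := ∑ m ∈ O, e m with hh
  have hmap_h : MvPolynomial.map ψ.toRingHom h = h := by
    rw [hh, map_sum]
    conv_rhs => rw [← himage, Finset.sum_image (fun a _ b _ hab => hqminj hab)]
    exact Finset.sum_congr rfl fun m _ => hmap_e m
  -- rationality of coefficients
  have hcoeff : ∀ d, ∃ a : F, algebraMap F L a = h.coeff d := by
    intro d
    apply fixed_mem_range
    rw [← hψ]
    have := congrArg (fun p => MvPolynomial.coeff d p) hmap_h
    simpa [MvPolynomial.coeff_map] using this
  choose coeffF hcoeffF using hcoeff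
  set f₀ : MvPolynomial (Fin s) F := ∑ d ∈ h.support, monomial d (coeffF d) with hf₀
  have hmapf₀ : MvPolynomial.map (algebraMap F L) f₀ = h := by
    rw [hf₀, map_sum]
    conv_rhs => rw [← support_sum_monomial_coeff h]
    exact Finset.sum_congr rfl fun d _ => by rw [map_monomial, hcoeffF]
  refine ⟨Ideal.Quotient.mk _ f₀, ?_, ?_⟩ <;>
  · intro m hm
    have hval : phi hα m (Ideal.Quotient.mk (polyRelIdeal F r) f₀)
        = if m ∈ O then 1 else 0 := by
      rw [phi_mk, aeval_def, ← eval_map (algebraMap F L) (gridPt α m) f₀, hmapf₀, hh, eval_sum]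
      calc ∑ m' ∈ O, eval (gridPt α m) (e m')
          = ∑ m' ∈ O, if m' = m then 1 else 0 :=
            Finset.sum_congr rfl fun m' _ => heval_e m' m
        _ = if m ∈ O then 1 else 0 := by rw [Finset.sum_ite_eq' O m (fun _ => (1 : L))]
    · first
      | (rw [hval, if_pos ((hmemO m).mpr hm)])
      | (rw [hval, if_neg (fun hc => hm ((hmemO m).mp hc))])
end Idem

section Null
variable {F L : Type*} [Field F] [Fintype F] [Field L] [Algebra F L]
variable {s : ℕ} {r : Fin s → ℕ} {α : Fin s → L}

lemma mem_of_vanishing (hr : ∀ i, 0 < r i)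
    (hqr : ∀ i, Nat.Coprime (Fintype.card F) (r i))
    (hα : ∀ i, orderOf (α i) = r i)
    (C : Ideal (MvPolynomial (Fin s) F ⧸ polyRelIdeal F r))
    (g : MvPolynomial (Fin s) F ⧸ polyRelIdeal F r)
    (hg : ∀ m : (∀ i, ZMod (r i)), (∀ x ∈ C, phi hα m x = 0) → phi hα m g = 0) :
    g ∈ C := by
  classical
  haveI : ∀ i, NeZero (r i) := fun i => ⟨(hr i).ne'⟩
  haveI : Module.Finite F (MvPolynomial (Fin s) F ⧸ polyRelIdeal F r) := finite_quot hr
  set q := Fintype.card F with hq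
  have hinj : ∀ x : MvPolynomial (Fin s) F ⧸ polyRelIdeal F r,
      (∀ m : (∀ i, ZMod (r i)), phi hα m x = 0) → x = 0 := by
    intro x hx
    apply phi_injective' hr hα
    intro m f hf
    rw [← phi_mk hα m f, hf]
    exact hx m
  choose eps heps1 heps0 using fun m => exists_orbit_idem hr hqr hα m
  have hOrbIff : ∀ {m m' : ∀ i, ZMod (r i)}, inOrbit r q m m' →
      ∀ x, (inOrbit r q m x ↔ inOrbit r q m' x) := by
    intro m m' hmm' x
    constructor
    · intro hx; exact inOrbit_trans (inOrbit_symm hr hqr hmm') hx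
    · intro hx; exact inOrbit_trans hmm' hx
  have hepsEq : ∀ m m' : (∀ i, ZMod (r i)), inOrbit r q m m' → eps m = eps m' := by
    intro m m' hmm'
    have hz : ∀ m'' : (∀ i, ZMod (r i)), phi hα m'' (eps m - eps m') = 0 := by
      intro m''
      rw [map_sub]
      by_cases hx : inOrbit r q m m''
      · rw [heps1 m m'' hx, heps1 m' m'' ((hOrbIff hmm' m'').mp hx), sub_self]
      · rw [heps0 m m'' hx, heps0 m' m'' (fun hc => hx ((hOrbIff hmm' m'').mpr hc)), sub_self]
    exact sub_eq_zero.mp (hinj _ hz)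
  set E : Finset (MvPolynomial (Fin s) F ⧸ polyRelIdeal F r) :=
    Finset.image eps Finset.univ with hE
  have hsumE : ∀ m' : (∀ i, ZMod (r i)), phi hα m' (∑ x ∈ E, x) = 1 := by
    intro m'
    rw [map_sum]
    have hterm : ∀ x ∈ E, phi hα m' x = if x = eps m' then 1 else 0 := by
      intro x hx
      obtain ⟨m, -, rfl⟩ := Finset.mem_image.mp hx
      by_cases horb : inOrbit r q m m'
      · rw [heps1 m m' horb, if_pos (hepsEq m m' horb)]
      · rw [heps0 m m' horb]
        rw [if_neg]
        intro hc
        have h1 : phi hα m' (eps m) = 1 := by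
          rw [hc]; exact heps1 m' m' (inOrbit_refl m')
        rw [heps0 m m' horb] at h1
        exact one_ne_zero h1.symm
    rw [Finset.sum_congr rfl hterm, Finset.sum_ite_eq' E (eps m') (fun _ => (1 : L))]
    rw [if_pos (Finset.mem_image.mpr ⟨m', Finset.mem_univ _, rfl⟩)]
  have hone : (∑ x ∈ E, x) = 1 := by
    have hz : ∀ m' : (∀ i, ZMod (r i)), phi hα m' ((∑ x ∈ E, x) - 1) = 0 := by
      intro m'; rw [map_sub, map_one, hsumE m', sub_self]
    exact sub_eq_zero.mp (hinj _ hz)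
  have hgsum : g = ∑ x ∈ E, g * x := by rw [← Finset.mul_sum, hone, mul_one]
  rw [hgsum]
  apply Ideal.sum_mem
  intro x hx
  obtain ⟨m, -, rfl⟩ := Finset.mem_image.mp hx
  by_cases hcase : ∀ m' : (∀ i, ZMod (r i)), inOrbit r q m m' → (∀ y ∈ C, phi hα m' y = 0)
  · have hz : g * eps m = 0 := by
      apply hinj
      intro m''
      rw [map_mul]
      by_cases horb : inOrbit r q m m''
      · rw [hg m'' (hcase m'' horb), zero_mul]
      · rw [heps0 m m'' horb, mul_zero]
    rw [hz]; exact C.zero_mem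
  · push_neg at hcase
    obtain ⟨m₁, hm₁orb, c, hcC, hcne⟩ := hcase
    have hcnz : ∀ m' : (∀ i, ZMod (r i)), inOrbit r q m₁ m' → phi hα m' c ≠ 0 := by
      rintro m' ⟨t, ht⟩
      have hfun : m' = fun i => (q : ZMod (r i)) ^ t * m₁ i := funext ht
      rw [hfun, phi_frob_pow hr hα m₁ c t]
      exact pow_ne_zero _ hcne
    have hmeq : eps m = eps m₁ := hepsEq m m₁ hm₁orb
    set V : Submodule F (MvPolynomial (Fin s) F ⧸ polyRelIdeal F r) :=
      LinearMap.range (LinearMap.mulRight F (eps m₁)) with hV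
    have hVmem : ∀ x ∈ V, ∃ y, y * eps m₁ = x := by
      intro x hx
      obtain ⟨y, hy⟩ := hx
      exact ⟨y, hy⟩
    have hVc : ∀ x ∈ V, (LinearMap.mulLeft F c) x ∈ V := by
      intro x hx
      obtain ⟨y, rfl⟩ := hVmem x hx
      refine ⟨c * y, ?_⟩
      rw [LinearMap.mulRight_apply, LinearMap.mulLeft_apply]
      ring
    set μ : V →ₗ[F] V := (LinearMap.mulLeft F c).restrict hVc with hμ
    have hμinj : Function.Injective μ := by
      rw [injective_iff_map_eq_zero]
      rintro ⟨x, hxV⟩ hx0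
      obtain ⟨y, rfl⟩ := hVmem x hxV
      have hcx : c * (y * eps m₁) = 0 := by
        have hval := congrArg Subtype.val hx0
        simpa [hμ, LinearMap.restrict_apply, LinearMap.mulLeft_apply] using hval
      have hx0' : (y * eps m₁ : MvPolynomial (Fin s) F ⧸ polyRelIdeal F r) = 0 := by
        apply hinj
        intro m''
        by_cases horb : inOrbit r q m₁ m''
        · have hmul := congrArg (phi hα m'') hcx
          rw [map_mul, map_zero] at hmul
          exact (mul_eq_zero.mp hmul).resolve_left (hcnz m'' horb)
        · rw [map_mul, heps0 m₁ m'' horb, mul_zero]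
      exact Subtype.ext hx0'
    have hμsurj : Function.Surjective μ := (LinearMap.injective_iff_surjective).mp hμinj
    have hεV : eps m₁ ∈ V := ⟨1, by rw [LinearMap.mulRight_apply, one_mul]⟩
    obtain ⟨⟨x, hxV⟩, hμx⟩ := hμsurj ⟨eps m₁, hεV⟩
    have hcx : c * x = eps m₁ := by
      have hval := congrArg Subtype.val hμx
      simpa [hμ, LinearMap.restrict_apply, LinearMap.mulLeft_apply] using hval
    have hεC : eps m₁ ∈ C := by
      rw [← hcx]
      exact Ideal.mul_mem_right x C hcC
    rw [hmeq]
    exact Ideal.mul_mem_left C g hεC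
end Null

/-- The map `C ↦ D_α(C)` is an inclusion-reversing bijection from the ideals of
`R = F[X]/⟨X_i^{r_i}-1⟩` onto the subsets of `∏ ZMod (r i)` that are unions of
`q`-orbits, with inverse `Q ↦ {f ∈ R : f(α^m) = 0 ∀ m ∈ Q}`. -/
theorem stmt11 {F L : Type*} [Field F] [Fintype F] [Field L] [Algebra F L]
    {s : ℕ} (r : Fin s → ℕ) (hr : ∀ i, 0 < r i)
    (hcop : Nat.Coprime (Fintype.card F) (∏ i, r i))
    (α : Fin s → L) (hα : ∀ i, orderOf (α i) = r i) :
    -- inclusion-reversing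
    (∀ C D : Ideal (MvPolynomial (Fin s) F ⧸ polyRelIdeal F r),
      C ≤ D ↔ defSet L r α D ⊆ defSet L r α C) ∧
    -- the image consists of unions of q-orbits
    (∀ C : Ideal (MvPolynomial (Fin s) F ⧸ polyRelIdeal F r),
      ∀ a ∈ defSet L r α C,
        (fun i => a i * (Fintype.card F : ZMod (r i))) ∈ defSet L r α C) ∧
    -- injectivity
    (∀ C D : Ideal (MvPolynomial (Fin s) F ⧸ polyRelIdeal F r),
      defSet L r α C = defSet L r α D → C = D) ∧
    -- surjectivity onto q-orbit-closed sets, realized by the stated inverse map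
    (∀ Q : Set ((i : Fin s) → ZMod (r i)),
      (∀ a ∈ Q, (fun i => a i * (Fintype.card F : ZMod (r i))) ∈ Q) →
      ∃ C : Ideal (MvPolynomial (Fin s) F ⧸ polyRelIdeal F r),
        (∀ g, g ∈ C ↔ ∀ f : MvPolynomial (Fin s) F,
            Ideal.Quotient.mk (polyRelIdeal F r) f = g →
            ∀ m ∈ Q, aeval (fun i => α i ^ (m i).val) f = 0) ∧
        defSet L r α C = Q) := by
    classical
  haveI : ∀ i, NeZero (r i) := fun i => ⟨(hr i).ne'⟩
  have hqr : ∀ i, Nat.Coprime (Fintype.card F) (r i) := fun i =>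
    Nat.Coprime.coprime_dvd_right (Finset.dvd_prod_of_mem r (Finset.mem_univ i)) hcop
  -- bridge between `defSet` and the evaluation maps `phi`
  have hdef : ∀ (C : Ideal (MvPolynomial (Fin s) F ⧸ polyRelIdeal F r))
      (m : ∀ i, ZMod (r i)), m ∈ defSet L r α C ↔ ∀ x ∈ C, phi hα m x = 0 := by
    intro C m
    constructor
    · intro hm x hx
      obtain ⟨f, rfl⟩ := Ideal.Quotient.mk_surjective x
      rw [phi_mk]
      exact hm f hx
    · intro hm f hf
      show aeval (gridPt α m) f = 0
      rw [← phi_mk hα m f]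
      exact hm _ hf
  have hNull : ∀ (C : Ideal (MvPolynomial (Fin s) F ⧸ polyRelIdeal F r)) g,
      (∀ m ∈ defSet L r α C, phi hα m g = 0) → g ∈ C := by
    intro C g hgg
    exact mem_of_vanishing hr hqr hα C g (fun m hm => hgg m ((hdef C m).mpr hm))
  have part1 : ∀ C D : Ideal (MvPolynomial (Fin s) F ⧸ polyRelIdeal F r),
      C ≤ D ↔ defSet L r α D ⊆ defSet L r α C := by
    intro C D
    constructor
    · intro hCD m hm f hf
      exact hm f (hCD hf)
    · intro hsub g hg
      apply hNull D
      intro m hm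
      exact (hdef C m).mp (hsub hm) g hg
  have part2 : ∀ C : Ideal (MvPolynomial (Fin s) F ⧸ polyRelIdeal F r),
      ∀ a ∈ defSet L r α C,
        (fun i => a i * (Fintype.card F : ZMod (r i))) ∈ defSet L r α C := by
    intro C a ha
    have ha' := (hdef C a).mp ha
    apply (hdef C _).mpr
    intro x hx
    have hz : phi hα (fun i => (Fintype.card F : ZMod (r i)) * a i) x = 0 := by
      rw [phi_frob hr hα a x, ha' x hx]
      exact zero_pow Fintype.card_ne_zero
    have hfe : (fun i => a i * (Fintype.card F : ZMod (r i)))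
        = (fun i => (Fintype.card F : ZMod (r i)) * a i) :=
      funext fun i => mul_comm _ _
    rw [hfe]
    exact hz
  refine ⟨part1, part2, ?_, ?_⟩
  · intro C D hCD
    apply le_antisymm
    · exact (part1 C D).mpr (by rw [hCD])
    · exact (part1 D C).mpr (by rw [hCD])
  · intro Q hQ
    -- Q is closed under (inverse) orbits
    have hstep : ∀ t : ℕ, ∀ a, a ∈ Q →
        (fun i => (Fintype.card F : ZMod (r i)) ^ t * a i) ∈ Q := by
      intro t
      induction t with
      | zero =>
        intro a ha
        have he : (fun i => (Fintype.card F : ZMod (r i)) ^ 0 * a i) = a :=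
          funext fun i => by rw [pow_zero, one_mul]
        rw [he]; exact ha
      | succ t ih =>
        intro a ha
        have h1 := hQ _ (ih a ha)
        have he : (fun i => (Fintype.card F : ZMod (r i)) ^ (t + 1) * a i)
            = fun i => ((Fintype.card F : ZMod (r i)) ^ t * a i) * (Fintype.card F : ZMod (r i)) :=
          funext fun i => by ring
        rw [he]; exact h1
    have hQorb : ∀ m ∈ Q, ∀ m', inOrbit r (Fintype.card F) m m' → m' ∈ Q := by
      rintro m hm m' ⟨t, ht⟩
      have : m' = fun i => (Fintype.card F : ZMod (r i)) ^ t * m i := funext ht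
      rw [this]
      exact hstep t m hm
    refine ⟨⨅ m ∈ Q, RingHom.ker (phi hα m), ?_, ?_⟩
    · intro g
      constructor
      · intro hg f hf m hm
        have hker : g ∈ RingHom.ker (phi hα m) := by
          have h1 := (Submodule.mem_iInf _).mp hg m
          exact (Submodule.mem_iInf _).mp h1 hm
        show aeval (gridPt α m) f = 0
        rw [← phi_mk hα m f, hf]
        exact hker
      · intro hg
        refine (Submodule.mem_iInf _).mpr fun m => (Submodule.mem_iInf _).mpr fun hm => ?_
        obtain ⟨f, rfl⟩ := Ideal.Quotient.mk_surjective g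
        rw [RingHom.mem_ker, phi_mk]
        exact hg f rfl m hm
    · apply Set.Subset.antisymm
      · intro m hm
        by_contra hmQ
        have hdisj : ∀ m₁ ∈ Q, ¬ inOrbit r (Fintype.card F) m m₁ := by
          intro m₁ hm₁ horb
          exact hmQ (hQorb m₁ hm₁ m (inOrbit_symm hr hqr horb))
        obtain ⟨ε, hε1, hε0⟩ := exists_orbit_idem hr hqr hα m
        have hεC : ε ∈ ⨅ m' ∈ Q, RingHom.ker (phi hα m') := by
          refine (Submodule.mem_iInf _).mpr fun m₁ => (Submodule.mem_iInf _).mpr fun hm₁ => ?_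
          rw [RingHom.mem_ker]
          exact hε0 m₁ (hdisj m₁ hm₁)
        have hzero := (hdef _ m).mp hm ε hεC
        rw [hε1 m (inOrbit_refl m)] at hzero
        exact one_ne_zero hzero
      · intro m hm f hf
        show aeval (gridPt α m) f = 0
        rw [← phi_mk hα m f]
        have h1 := (Submodule.mem_iInf _).mp hf m
        exact (Submodule.mem_iInf _).mp h1 hm
end

section
/- Let C be an ideal of R = F[X_1,…,X_s]/⟨X_i^{r_i}−1⟩ over a finite field F with gcd(|F|, n)=1 and generating idempotent e (so C = Re). Then dim_F(C) = |{m ∈ ∏ Z_{r_i} : e(α^m) ≠ 0}|, the cardinality of the support of the DFT of e. -/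
open MvPolynomial

open Module Submodule in
lemma auxFinrankSpanRangeLe {K V ι : Type*} [Field K] [AddCommGroup V] [Module K V]
    [Fintype ι] (g : ι → V) :
    Module.finrank K (Submodule.span K (Set.range g)) ≤ Fintype.card ι := by
  classical
  have h : Set.range g = ↑(Finset.image g Finset.univ) := by simp
  rw [h]
  refine le_trans (finrank_span_finset_le_card _) ?_
  exact le_trans (Finset.card_image_le) (le_of_eq (Finset.card_univ))

open Module Submodule in
lemma auxSpanImageLe {F L M V : Type*} [Field F] [Field L] [Algebra F L]
    [AddCommGroup M] [Module F M] [Module.Finite F M]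
    [AddCommGroup V] [Module F V] [Module L V] [IsScalarTower F L V]
    (f : M →ₗ[F] V) (p : Submodule F M) :
    finrank L (span L (⇑f '' (p : Set M))) ≤ finrank F p := by
  classical
  set d := finrank F p with hd
  let b : Basis (Fin d) F p := finBasis F p
  have hp : span F (Set.range fun i => ((b i : M))) = p := by
    have h1 : Submodule.map p.subtype ⊤ = p := Submodule.map_subtype_top p
    rw [← b.span_eq, Submodule.map_span, ← Set.range_comp] at h1
    exact h1
  have himg2 : Submodule.map f p = span F (Set.range fun i => f (b i)) := by
    have h3 := congrArg (Submodule.map f) hp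
    rw [Submodule.map_span, ← Set.range_comp] at h3
    rw [← h3]
    rfl
  have himg : ⇑f '' (p : Set M) = ↑(span F (Set.range fun i => f (b i))) := by
    rw [← himg2]
    rfl
  have key : ∀ X : Set V, span L ((span F X : Submodule F V) : Set V) = span L X := by
    intro X
    apply le_antisymm
    · rw [Submodule.span_le]
      exact fun x hx => Submodule.span_le_restrictScalars F L X hx
    · exact Submodule.span_mono Submodule.subset_span
  rw [himg, key]
  simpa using auxFinrankSpanRangeLe (fun i => f (b i))

lemma auxPowMod {Mo : Type*} [Monoid Mo] {x : Mo} {n : ℕ} (h : x ^ n = 1) (a : ℕ) :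
    x ^ a = x ^ (a % n) := by
  conv_lhs => rw [← Nat.mod_add_div a n]
  rw [pow_add, pow_mul, h, one_pow, mul_one]

lemma auxPowInj {L : Type*} [Field L] {x : L} {n : ℕ} (hn : 0 < n) (hx : orderOf x = n)
    {a b : ℕ} (ha : a < n) (hb : b < n) (h : x ^ a = x ^ b) : a = b := by
  have hx1 : x ^ n = 1 := by rw [← hx]; exact pow_orderOf_eq_one x
  have hx0 : x ≠ 0 := by
    rintro rfl
    rw [zero_pow hn.ne'] at hx1
    exact zero_ne_one hx1
  wlog hab : a ≤ b generalizing a b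
  · exact (this hb ha h.symm (le_of_not_ge hab)).symm
  obtain ⟨t, rfl⟩ := Nat.exists_eq_add_of_le hab
  have ht : x ^ t = 1 := by
    refine mul_left_cancel₀ (pow_ne_zero a hx0) ?_
    rw [mul_one, ← pow_add]
    exact h.symm
  have hdvd : n ∣ t := hx ▸ orderOf_dvd_of_pow_eq_one ht
  rcases Nat.eq_zero_or_pos t with h0 | h0
  · omega
  · exact absurd (Nat.le_of_dvd h0 hdvd) (by omega)

/-- If the point evaluations of a ring hom into a finite power of a field are linearly
independent characters, the image of the hom spans everything over `L`. -/
lemma auxSpanTop {L R M : Type*} [Field L] [CommRing R] [Fintype M]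
    (Φ : R →+* (M → L))
    (hind : LinearIndependent L (fun m : M => (fun x : R => Φ x m))) :
    Submodule.span L (Set.range ⇑Φ) = ⊤ := by
  classical
  by_contra hne
  obtain ⟨g, hg0, hgmap⟩ :=
    Submodule.exists_dual_map_eq_bot_of_lt_top (lt_top_iff_ne_top.mpr hne) inferInstance
  set c : M → L := fun m => g (Pi.single m 1) with hc
  have hgv : ∀ w : M → L, g w = ∑ m, w m * c m := by
    intro w
    conv_lhs => rw [← Finset.univ_sum_single w]
    rw [map_sum]
    refine Finset.sum_congr rfl fun m _ => ?_
    have h1 : (Pi.single m (w m) : M → L) = w m • (Pi.single m (1 : L) : M → L) := by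
      rw [← Pi.single_smul, smul_eq_mul, mul_one]
    rw [h1, map_smul, smul_eq_mul, hc]
  have hgΦ : ∀ x : R, g (Φ x) = 0 := by
    intro x
    have hx : Φ x ∈ Submodule.span L (Set.range ⇑Φ) :=
      Submodule.subset_span (Set.mem_range_self x)
    have h2 : g (Φ x) ∈ Submodule.map g (Submodule.span L (Set.range ⇑Φ)) :=
      Submodule.mem_map_of_mem hx
    rw [hgmap] at h2
    exact (Submodule.mem_bot L).mp h2
  have hc0 : ∀ m, c m = 0 := by
    refine Fintype.linearIndependent_iff.mp hind c ?_
    funext x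
    show (∑ m, c m • (fun x : R => Φ x m)) x = 0
    rw [Finset.sum_apply]
    simp only [Pi.smul_apply, smul_eq_mul]
    calc ∑ m, c m * Φ x m = ∑ m, Φ x m * c m :=
          Finset.sum_congr rfl fun m _ => mul_comm _ _
      _ = g (Φ x) := (hgv (Φ x)).symm
      _ = 0 := hgΦ x
  apply hg0
  refine LinearMap.ext fun w => ?_
  rw [hgv w]
  simp [hc0]

set_option synthInstance.maxHeartbeats 400000 in
set_option maxHeartbeats 1000000 in
/-- Main abstract lemma: if `Φ : R →ₐ[F] (M → L)` has `L`-spanning image, `R` has `F`-dimension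
at most `|M|`, and `e` is idempotent, then the dimension of `Re` over `F` is the number of
coordinates where `Φ e` does not vanish. -/
lemma auxMain {F L R M : Type*} [Field F] [Field L] [Algebra F L] [CommRing R] [Algebra F R]
    [Fintype M] [Module.Finite F R]
    (Φ : R →ₐ[F] (M → L))
    (hrank : Module.finrank F R ≤ Fintype.card M)
    (hspanL : Submodule.span L (Set.range ⇑Φ) = ⊤)
    (e : R) (he : e * e = e)
    (C : Ideal R) (hC : C = Ideal.span {e}) :
    Module.finrank F (C.restrictScalars F) = {m : M | Φ e m ≠ 0}.ncard := by
  classical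
  set t : M → L := Φ e with ht
  have hidem : t * t = t := by rw [ht, ← map_mul, he]
  have ht01 : ∀ m, t m = 0 ∨ t m = 1 := by
    intro m
    have h2 : t m * t m = t m := congrFun hidem m
    have h1 : t m * (t m - 1) = 0 := by
      rw [mul_sub, h2, mul_one, sub_self]
    rcases mul_eq_zero.mp h1 with h | h
    · exact Or.inl h
    · exact Or.inr (by linear_combination h)
  set S : Set M := {m | t m ≠ 0} with hS
  set μ : (M → L) →ₗ[L] (M → L) := LinearMap.mulLeft L t with hμ
  set μ' : (M → L) →ₗ[L] (M → L) := LinearMap.mulLeft L (1 - t) with hμ'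
  have hμap : ∀ w, μ w = t * w := fun w => rfl
  have hμ'ap : ∀ w, μ' w = (1 - t) * w := fun w => rfl
  have hker : LinearMap.ker μ = LinearMap.range μ' := by
    ext w
    rw [LinearMap.mem_ker]
    constructor
    · intro hw
      exact ⟨w, by rw [hμ'ap, sub_mul, one_mul, ← hμap, hw, sub_zero]⟩
    · rintro ⟨w', rfl⟩
      rw [hμap, hμ'ap, ← mul_assoc, mul_sub, mul_one, hidem, sub_self, zero_mul]
  have hranμ : LinearMap.range μ
      = Submodule.span L (Set.range fun m : S => (Pi.single (m : M) (1 : L) : M → L)) := by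
    apply le_antisymm
    · rintro _ ⟨w, rfl⟩
      rw [hμap]
      have hw : t * w = ∑ m, Pi.single m ((t * w) m) := (Finset.univ_sum_single (t * w)).symm
      rw [hw]
      refine Submodule.sum_mem _ fun m _ => ?_
      rcases ht01 m with h | h
      · have h3 : (t * w) m = 0 := by rw [Pi.mul_apply, h, zero_mul]
        rw [h3, Pi.single_zero]
        exact Submodule.zero_mem _
      · have hmS : m ∈ S := by rw [hS]; simp [h]
        have h4 : (Pi.single m ((t * w) m) : M → L)
            = ((t * w) m) • (Pi.single m (1 : L) : M → L) := by
          rw [← Pi.single_smul, smul_eq_mul, mul_one]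
        rw [h4]
        exact Submodule.smul_mem _ _ (Submodule.subset_span ⟨⟨m, hmS⟩, rfl⟩)
    · rw [Submodule.span_le]
      rintro _ ⟨m, rfl⟩
      refine ⟨Pi.single (m : M) 1, ?_⟩
      rw [hμap]
      funext k
      rw [Pi.mul_apply]
      rcases eq_or_ne k (m : M) with h | h
      · subst h
        have h5 : t (m : M) = 1 := by
          rcases ht01 (m : M) with h' | h'
          · exact absurd h' m.2
          · exact h'
        simp [h5]
      · simp [Pi.single_eq_of_ne h]
  have hindS : LinearIndependent L (fun m : S => (Pi.single (m : M) (1 : L) : M → L)) := by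
    have h1 : LinearIndependent L (fun m : M => (Pi.single m (1 : L) : M → L)) := by
      have h2 := (Pi.basisFun L M).linearIndependent
      have heq : ⇑(Pi.basisFun L M) = fun m : M => (Pi.single m (1 : L) : M → L) := by
        funext m; exact Pi.basisFun_apply L M m
      rwa [heq] at h2
    exact h1.comp Subtype.val Subtype.val_injective
  have hkS : Module.finrank L (LinearMap.range μ) = S.ncard := by
    rw [hranμ, finrank_span_eq_card hindS]
    rw [← Nat.card_coe_set_eq, Nat.card_eq_fintype_card]
  have hsumL : Module.finrank L (LinearMap.range μ) + Module.finrank L (LinearMap.range μ')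
      = Fintype.card M := by
    rw [← hker, LinearMap.finrank_range_add_finrank_ker μ]
    exact Module.finrank_fintype_fun_eq_card L
  set C' : Ideal R := Ideal.span {1 - e} with hC'
  have hCim : Submodule.span L (⇑Φ '' (C : Set R)) = LinearMap.range μ := by
    apply le_antisymm
    · rw [Submodule.span_le]
      rintro _ ⟨x, hx, rfl⟩
      rw [hC] at hx
      obtain ⟨a, rfl⟩ := Ideal.mem_span_singleton'.mp hx
      exact ⟨Φ a, by rw [hμap, ht, ← map_mul, mul_comm]⟩
    · rintro _ ⟨w, rfl⟩
      have hw : w ∈ Submodule.span L (Set.range ⇑Φ) := by rw [hspanL]; trivial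
      have h6 : μ w ∈ Submodule.map μ (Submodule.span L (Set.range ⇑Φ)) :=
        Submodule.mem_map_of_mem hw
      rw [Submodule.map_span] at h6
      refine Submodule.span_le.mpr ?_ h6
      rintro _ ⟨_, ⟨x, rfl⟩, rfl⟩
      refine Submodule.subset_span ⟨x * e, ?_, ?_⟩
      · rw [hC]; exact Ideal.mem_span_singleton'.mpr ⟨x, rfl⟩
      · rw [hμap, ht, ← map_mul, mul_comm]
  have hC'im : Submodule.span L (⇑Φ '' (C' : Set R)) = LinearMap.range μ' := by
    have hΦ1e : Φ (1 - e) = 1 - t := by rw [map_sub, map_one, ht]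
    apply le_antisymm
    · rw [Submodule.span_le]
      rintro _ ⟨x, hx, rfl⟩
      rw [hC'] at hx
      obtain ⟨a, rfl⟩ := Ideal.mem_span_singleton'.mp hx
      exact ⟨Φ a, by rw [hμ'ap, ← hΦ1e, ← map_mul, mul_comm]⟩
    · rintro _ ⟨w, rfl⟩
      have hw : w ∈ Submodule.span L (Set.range ⇑Φ) := by rw [hspanL]; trivial
      have h7 : μ' w ∈ Submodule.map μ' (Submodule.span L (Set.range ⇑Φ)) :=
        Submodule.mem_map_of_mem hw
      rw [Submodule.map_span] at h7
      refine Submodule.span_le.mpr ?_ h7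
      rintro _ ⟨_, ⟨x, rfl⟩, rfl⟩
      refine Submodule.subset_span ⟨x * (1 - e), ?_, ?_⟩
      · rw [hC']; exact Ideal.mem_span_singleton'.mpr ⟨x, rfl⟩
      · rw [hμ'ap, ← hΦ1e, ← map_mul, mul_comm]
  have hle1 : Module.finrank L (LinearMap.range μ)
      ≤ Module.finrank F (C.restrictScalars F) := by
    rw [← hCim]
    exact auxSpanImageLe Φ.toLinearMap (C.restrictScalars F)
  have hle2 : Module.finrank L (LinearMap.range μ')
      ≤ Module.finrank F (C'.restrictScalars F) := by
    rw [← hC'im]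
    exact auxSpanImageLe Φ.toLinearMap (C'.restrictScalars F)
  set π : R →ₗ[F] R := LinearMap.mulLeft F e with hπ
  have hπap : ∀ x, π x = e * x := fun x => rfl
  have hranπ : LinearMap.range π = C.restrictScalars F := by
    ext x
    constructor
    · rintro ⟨a, rfl⟩
      rw [hπap]
      show e * a ∈ C
      rw [hC]
      exact Ideal.mem_span_singleton'.mpr ⟨a, mul_comm a e⟩
    · intro hx
      have hx' : x ∈ C := hx
      rw [hC] at hx'
      obtain ⟨a, rfl⟩ := Ideal.mem_span_singleton'.mp hx'
      exact ⟨a, by rw [hπap, mul_comm]⟩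
  have hkerπ : LinearMap.ker π = C'.restrictScalars F := by
    ext x
    rw [LinearMap.mem_ker, hπap]
    constructor
    · intro hx
      show x ∈ C'
      rw [hC']
      refine Ideal.mem_span_singleton'.mpr ⟨x, ?_⟩
      rw [mul_sub, mul_one, mul_comm, hx, sub_zero]
    · intro hx
      have hx' : x ∈ C' := hx
      rw [hC'] at hx'
      obtain ⟨a, rfl⟩ := Ideal.mem_span_singleton'.mp hx'
      have h0 : e * (1 - e) = 0 := by rw [mul_sub, mul_one, he, sub_self]
      rw [show e * (a * (1 - e)) = a * (e * (1 - e)) by ring, h0, mul_zero]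
  have hdimF : Module.finrank F (C.restrictScalars F) + Module.finrank F (C'.restrictScalars F)
      = Module.finrank F R := by
    rw [← hranπ, ← hkerπ]
    exact LinearMap.finrank_range_add_finrank_ker π
  rw [← hkS]
  omega

set_option synthInstance.maxHeartbeats 1000000 in
set_option maxHeartbeats 1000000 in
/-- If `C = Re` with `e` idempotent, then `dim_F C` equals the cardinality of the support
of the DFT of `e`, i.e. `|{m : e(α^m) ≠ 0}|`. -/
theorem stmt18 {F L : Type*} [Field F] [Fintype F] [Field L] [Algebra F L]
    {s : ℕ} (r : Fin s → ℕ) (hr : ∀ i, 0 < r i)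
    (hcop : Nat.Coprime (Fintype.card F) (∏ i, r i))
    (α : Fin s → L) (hα : ∀ i, orderOf (α i) = r i)
    (e : MvPolynomial (Fin s) F ⧸ polyRelIdeal F r) (he : e * e = e)
    (C : Ideal (MvPolynomial (Fin s) F ⧸ polyRelIdeal F r))
    (hC : C = Ideal.span {e}) :
    Module.finrank F (C.restrictScalars F) =
      {m : (i : Fin s) → ZMod (r i) |
        ∀ f : MvPolynomial (Fin s) F, Ideal.Quotient.mk (polyRelIdeal F r) f = e →
          aeval (fun i => α i ^ (m i).val) f ≠ 0}.ncard := by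
  classical
  haveI hNZ : ∀ i, NeZero (r i) := fun i => ⟨(hr i).ne'⟩
  letI : ∀ i, Fintype (ZMod (r i)) := fun i => @ZMod.fintype _ (hNZ i)
  letI : Fintype ((i : Fin s) → ZMod (r i)) := inferInstance
  -- the evaluation algebra map
  set Ψ : MvPolynomial (Fin s) F →ₐ[F] (((i : Fin s) → ZMod (r i)) → L) :=
    Pi.algHom _ _ (fun m => aeval (fun i => α i ^ (m i).val)) with hΨ
  have hαpow : ∀ i, α i ^ r i = 1 := fun i => by
    rw [← hα i]; exact pow_orderOf_eq_one (α i)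
  have hΨ0 : ∀ a ∈ polyRelIdeal F r, Ψ a = 0 := by
    have hle : polyRelIdeal F r ≤ RingHom.ker Ψ.toRingHom := by
      rw [polyRelIdeal, Ideal.span_le]
      rintro _ ⟨i, rfl⟩
      rw [SetLike.mem_coe, RingHom.mem_ker]
      funext m
      show aeval (fun i => α i ^ (m i).val) (X i ^ r i - 1) = 0
      rw [map_sub, map_pow, aeval_X, map_one, ← pow_mul, mul_comm, pow_mul, hαpow i,
        one_pow, sub_self]
    exact fun a ha => hle ha
  set Φ : (MvPolynomial (Fin s) F ⧸ polyRelIdeal F r) →ₐ[F] (((i : Fin s) → ZMod (r i)) → L) :=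
    Ideal.Quotient.liftₐ _ Ψ hΨ0 with hΦ
  have hΦmk : ∀ f, Φ (Ideal.Quotient.mk (polyRelIdeal F r) f) = Ψ f := fun f => by
    rw [hΦ, Ideal.Quotient.liftₐ_apply]
    rfl
  -- generators x_i
  have hXr : ∀ i, (Ideal.Quotient.mk (polyRelIdeal F r) (X i)) ^ (r i) = 1 := by
    intro i
    rw [← map_pow, ← sub_eq_zero, ← map_one (Ideal.Quotient.mk (polyRelIdeal F r)), ← map_sub,
      Ideal.Quotient.eq_zero_iff_mem]
    exact Ideal.subset_span ⟨i, rfl⟩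
  -- spanning family
  set u : ((i : Fin s) → ZMod (r i)) → (MvPolynomial (Fin s) F ⧸ polyRelIdeal F r) :=
    fun m => Ideal.Quotient.mk (polyRelIdeal F r) (∏ i, X i ^ (m i).val) with hu
  have hspanF : Submodule.span F (Set.range u) = ⊤ := by
    rw [eq_top_iff]
    rintro x -
    obtain ⟨f, rfl⟩ := Ideal.Quotient.mk_surjective x
    rw [← support_sum_monomial_coeff f, map_sum]
    refine Submodule.sum_mem _ fun a _ => ?_
    have h1 : (monomial a) (coeff a f)
        = (coeff a f) • (monomial a (1 : F)) := by
      rw [MvPolynomial.smul_monomial, smul_eq_mul, mul_one]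
    have h2 : Ideal.Quotient.mk (polyRelIdeal F r) ((coeff a f) • (monomial a (1 : F)))
        = (coeff a f) • Ideal.Quotient.mk (polyRelIdeal F r) (monomial a 1) :=
      map_smul (Ideal.Quotient.mkₐ F (polyRelIdeal F r)) _ _
    rw [h1, h2]
    refine Submodule.smul_mem _ _ (Submodule.subset_span ?_)
    refine ⟨fun i => ((a i : ℕ) : ZMod (r i)), ?_⟩
    show Ideal.Quotient.mk (polyRelIdeal F r) (∏ i, X i ^ (((a i : ℕ) : ZMod (r i))).val)
      = Ideal.Quotient.mk (polyRelIdeal F r) (monomial a 1)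
    rw [monomial_eq, map_one, one_mul, Finsupp.prod_pow, map_prod, map_prod]
    refine Finset.prod_congr rfl fun i _ => ?_
    rw [map_pow, map_pow, ZMod.val_natCast, ← auxPowMod (hXr i)]
  haveI hfin : Module.Finite F (MvPolynomial (Fin s) F ⧸ polyRelIdeal F r) :=
    ⟨Submodule.fg_def.mpr ⟨Set.range u, Set.finite_range u, hspanF⟩⟩
  have hrank : Module.finrank F (MvPolynomial (Fin s) F ⧸ polyRelIdeal F r)
      ≤ Fintype.card ((i : Fin s) → ZMod (r i)) := by
    rw [← finrank_top F _, ← hspanF]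
    exact auxFinrankSpanRangeLe u
  -- linear independence of characters
  set χ : ((i : Fin s) → ZMod (r i)) → ((MvPolynomial (Fin s) F ⧸ polyRelIdeal F r) →* L) :=
    fun m => ((Pi.evalRingHom (fun _ => L) m).comp Φ.toRingHom).toMonoidHom with hχ
  have hχX : ∀ m i, χ m (Ideal.Quotient.mk (polyRelIdeal F r) (X i)) = α i ^ (m i).val := by
    intro m i
    show Φ (Ideal.Quotient.mk (polyRelIdeal F r) (X i)) m = _
    rw [hΦmk]
    show aeval (fun i => α i ^ (m i).val) (X i) = _
    rw [aeval_X]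
  have hχinj : Function.Injective χ := by
    intro m m' h
    funext i
    have h2 : α i ^ (m i).val = α i ^ (m' i).val := by
      rw [← hχX m i, ← hχX m' i, h]
    exact ZMod.val_injective _ (auxPowInj (hr i) (hα i) (ZMod.val_lt _) (ZMod.val_lt _) h2)
  have hind : LinearIndependent L
      (fun m : (i : Fin s) → ZMod (r i) =>
        (fun x : MvPolynomial (Fin s) F ⧸ polyRelIdeal F r => Φ x m)) := by
    have := (linearIndependent_monoidHom (MvPolynomial (Fin s) F ⧸ polyRelIdeal F r) L).comp
      χ hχinj
    exact this
  have hspanL : Submodule.span L (Set.range ⇑Φ) = ⊤ := by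
    have := auxSpanTop Φ.toRingHom hind
    exact this
  -- apply the main lemma and identify the sets
  have hmain := auxMain Φ hrank hspanL e he C hC
  rw [hmain]
  congr 1
  ext m
  simp only [Set.mem_setOf_eq]
  constructor
  · intro hm f hf
    have h2 : aeval (fun i => α i ^ (m i).val) f = Φ e m := by
      rw [← hf, hΦmk]
      rfl
    rwa [h2]
  · intro hm
    obtain ⟨f, hf⟩ := Ideal.Quotient.mk_surjective e
    have h1 := hm f hf
    have h2 : aeval (fun i => α i ^ (m i).val) f = Φ e m := by
      rw [← hf, hΦmk]
      rfl
    rwa [h2] at h1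
end
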